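/- (Addition rule / projectivity of the Poisson–Dirichlet partition weights.) Fix real parameters 0 < η_a < 1 and η_b > 0, and for a partition S = (S_1, …, S_C) of {1,…,n} with block sizes n_c = |S_c| define P_{η,[n]}(S) = (Γ(η_b)/Γ(η_b+n)) · (η_a^C Γ(η_b/η_a + C)/Γ(η_b/η_a)) · ∏_{c=1}^C Γ(n_c − η_a)/Γ(1 − η_a). Then for every n ≥ 2 and every partition S' = (S_1, …, S_C) of {1,…,n−1}: ∑_{c=1}^C P_{η,[n]}(S' with the element n added to block S_c) + P_{η,[n]}((S_1, …, S_C, {n})) = P_{η,[n−1]}(S'). -/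

import Mathlib

/-- The (ordered) Poisson–Dirichlet partition weight
`P_{η,[n]}(S) = (Γ(η_b)/Γ(η_b+n)) · η_a^C Γ(η_b/η_a + C)/Γ(η_b/η_a) ·
∏_c Γ(n_c − η_a)/Γ(1 − η_a)`, where `C` is the number of blocks and `n_c` the block
sizes of the partition `S` (given as a list of blocks). -/
noncomputable def PDPweight (ηa ηb : ℝ) (n : ℕ) (blocks : List (Finset ℕ)) : ℝ :=
  (Real.Gamma ηb / Real.Gamma (ηb + n)) *
    (ηa ^ blocks.length * Real.Gamma (ηb / ηa + blocks.length) / Real.Gamma (ηb / ηa)) *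
    (blocks.map (fun b => Real.Gamma ((b.card : ℝ) - ηa) / Real.Gamma (1 - ηa))).prod

/-- The "prefactor" of the Poisson–Dirichlet weight. -/
noncomputable def PDPK (ηa ηb : ℝ) (n C : ℕ) : ℝ :=
  (Real.Gamma ηb / Real.Gamma (ηb + n)) *
    (ηa ^ C * Real.Gamma (ηb / ηa + C) / Real.Gamma (ηb / ηa))

/-- The product part of the Poisson–Dirichlet weight. -/
noncomputable def PDPP (ηa : ℝ) (blocks : List (Finset ℕ)) : ℝ :=
  (blocks.map (fun b => Real.Gamma ((b.card : ℝ) - ηa) / Real.Gamma (1 - ηa))).prod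

lemma PDPweight_eq (ηa ηb : ℝ) (n : ℕ) (blocks : List (Finset ℕ)) :
    PDPweight ηa ηb n blocks = PDPK ηa ηb n blocks.length * PDPP ηa blocks := rfl

lemma PDPP_set (ηa : ℝ) (blocks : List (Finset ℕ)) (c : ℕ) (hc : c < blocks.length)
    (a : Finset ℕ) :
    PDPP ηa (blocks.set c a) * (Real.Gamma ((blocks[c].card : ℝ) - ηa) / Real.Gamma (1 - ηa))
      = PDPP ηa blocks * (Real.Gamma ((a.card : ℝ) - ηa) / Real.Gamma (1 - ηa)) := by
  unfold PDPP
  rw [List.map_set, List.prod_set, if_pos (by simpa using hc)]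
  conv_rhs => rw [← List.prod_take_mul_prod_drop
    (blocks.map (fun b => Real.Gamma ((b.card : ℝ) - ηa) / Real.Gamma (1 - ηa))) c,
    List.drop_eq_getElem_cons (by simpa using hc), List.prod_cons, List.getElem_map]
  ring

lemma PDP_subset_foldr (l : List (Finset ℕ)) : ∀ b ∈ l, b ⊆ l.foldr (· ∪ ·) ∅ := by
  induction l with
  | nil => simp
  | cons a t ih =>
    intro b hb
    rcases List.mem_cons.mp hb with h | h
    · exact h ▸ Finset.subset_union_left
    · exact (ih b h).trans Finset.subset_union_right

lemma PDP_disjoint_foldr (a : Finset ℕ) (l : List (Finset ℕ))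
    (h : ∀ b ∈ l, Disjoint a b) : Disjoint a (l.foldr (· ∪ ·) ∅) := by
  induction l with
  | nil => simp
  | cons x t ih =>
    simp only [List.foldr_cons, Finset.disjoint_union_right]
    exact ⟨h x (by simp), ih fun b hb => h b (by simp [hb])⟩

lemma PDP_card_foldr (l : List (Finset ℕ)) (h : l.Pairwise (fun a b => Disjoint a b)) :
    (l.foldr (· ∪ ·) ∅).card = (l.map Finset.card).sum := by
  induction l with
  | nil => simp
  | cons a t ih =>
    rw [List.pairwise_cons] at h
    simp only [List.foldr_cons, List.map_cons, List.sum_cons]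
    rw [Finset.card_union_of_disjoint (PDP_disjoint_foldr a t h.1), ih h.2]

lemma PDP_sum_getD_card (l : List (Finset ℕ)) :
    ∑ c ∈ Finset.range l.length, ((l.getD c ∅).card : ℝ) = ((l.map Finset.card).sum : ℝ) := by
  induction l with
  | nil => simp
  | cons a t ih =>
    rw [List.length_cons, Finset.sum_range_succ']
    simp only [List.getD_cons_succ, List.getD_cons_zero, ih, List.map_cons, List.sum_cons]
    push_cast
    ring

/- **Statement 10.** Addition rule / projectivity of the Poisson–Dirichlet partition
weights: for a partition `S' = (S_1,…,S_C)` of `{1,…,n−1}`, summing the weight of the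
partitions of `{1,…,n}` obtained by adding `n` to a block of `S'` or as a new singleton
block recovers the weight of `S'`. -/
set_option maxHeartbeats 1000000 in
theorem PDP_addition_rule (ηa ηb : ℝ) (h0 : 0 < ηa) (h1 : ηa < 1) (hb : 0 < ηb)
    (n : ℕ) (hn : 2 ≤ n) (blocks : List (Finset ℕ))
    (hne : ∀ b ∈ blocks, b.Nonempty)
    (hdisj : blocks.Pairwise (fun a b => Disjoint a b))
    (hunion : blocks.foldr (· ∪ ·) ∅ = Finset.Icc 1 (n-1)) :
    (∑ c ∈ Finset.range blocks.length,
        PDPweight ηa ηb n (blocks.set c (insert n (blocks.getD c ∅))))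
      + PDPweight ηa ηb n (blocks ++ [{n}])
      = PDPweight ηa ηb (n-1) blocks := by
  classical
  set C := blocks.length with hCdef
  set P : ℝ := PDPP ηa blocks with hP
  set K : ℝ := PDPK ηa ηb n C with hK
  have hηa : ηa ≠ 0 := ne_of_gt h0
  have hΓ1 : 0 < Real.Gamma (1 - ηa) := Real.Gamma_pos_of_pos (by linarith)
  have hΓb : 0 < Real.Gamma ηb := Real.Gamma_pos_of_pos hb
  have hΓr : 0 < Real.Gamma (ηb / ηa) := Real.Gamma_pos_of_pos (div_pos hb h0)
  have hΓrC : 0 < Real.Gamma (ηb / ηa + C) := Real.Gamma_pos_of_pos (by positivity)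
  -- blocks are contained in {1,…,n-1}, hence don't contain n
  have hnot : ∀ b ∈ blocks, n ∉ b := by
    intro b hbm hmem
    have := (hunion ▸ PDP_subset_foldr blocks b hbm) hmem
    rw [Finset.mem_Icc] at this
    omega
  have hcard : ∀ b ∈ blocks, 1 ≤ b.card := fun b h => Finset.card_pos.mpr (hne b h)
  -- sum of block cards is n - 1
  have hsumcard : (blocks.map Finset.card).sum = n - 1 := by
    rw [← PDP_card_foldr blocks hdisj, hunion, Nat.card_Icc]
    omega
  -- per-block key computation
  have key : ∀ c ∈ Finset.range C,
      PDPweight ηa ηb n (blocks.set c (insert n (blocks.getD c ∅))) =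
      K * ((((blocks.getD c ∅).card : ℝ) - ηa) * P) := by
    intro c hc
    rw [Finset.mem_range] at hc
    have hbc : blocks.getD c ∅ = blocks[c] := List.getD_eq_getElem blocks ∅ hc
    have hmem : blocks[c] ∈ blocks := List.getElem_mem hc
    have hxpos : (0:ℝ) < (blocks[c].card : ℝ) - ηa := by
      have : (1:ℝ) ≤ (blocks[c].card : ℝ) := by exact_mod_cast hcard _ hmem
      linarith
    have hcardins : (insert n blocks[c]).card = blocks[c].card + 1 :=
      Finset.card_insert_of_notMem (hnot _ hmem)
    have hΓc : 0 < Real.Gamma ((blocks[c].card : ℝ) - ηa) := Real.Gamma_pos_of_pos hxpos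
    have hPset : PDPP ηa (blocks.set c (insert n blocks[c])) =
        ((blocks[c].card : ℝ) - ηa) * P := by
      have h2 := PDPP_set ηa blocks c hc (insert n blocks[c])
      rw [hcardins] at h2
      rw [show (((blocks[c].card + 1 : ℕ)) : ℝ) - ηa = ((blocks[c].card : ℝ) - ηa) + 1 by
            push_cast; ring,
        Real.Gamma_add_one (ne_of_gt hxpos)] at h2
      have hne0 : Real.Gamma ((blocks[c].card : ℝ) - ηa) / Real.Gamma (1 - ηa) ≠ 0 :=
        ne_of_gt (by positivity)
      apply mul_right_cancel₀ hne0
      rw [h2, hP]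
      ring
    rw [hbc, PDPweight_eq, List.length_set, hPset, hK, ← hCdef]
  rw [Finset.sum_congr rfl key]
  -- the singleton term
  have hsingle : PDPweight ηa ηb n (blocks ++ [{n}]) = K * ((ηb + C * ηa) * P) := by
    rw [PDPweight_eq, List.length_append, List.length_singleton]
    have hPapp : PDPP ηa (blocks ++ [{n}]) = P := by
      rw [PDPP, List.map_append, List.prod_append]
      simp [div_self (ne_of_gt hΓ1), hP, PDPP]
    rw [hPapp, PDPK]
    have hΓrec : Real.Gamma (ηb / ηa + ((C : ℝ) + 1)) =
        (ηb / ηa + C) * Real.Gamma (ηb / ηa + C) := by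
      rw [show ηb / ηa + ((C : ℝ) + 1) = (ηb / ηa + C) + 1 by ring,
        Real.Gamma_add_one (by positivity)]
    push_cast
    rw [hΓrec, hK, PDPK, ← hCdef]
    field_simp
    ring
  rw [hsingle, ← Finset.mul_sum, ← Finset.sum_mul, Finset.sum_sub_distrib,
    PDP_sum_getD_card, Finset.sum_const, Finset.card_range, nsmul_eq_mul, hsumcard]
  -- final arithmetic
  have hcastn : ((n - 1 : ℕ) : ℝ) = (n : ℝ) - 1 := by
    have h' : (1:ℕ) ≤ n := by omega
    push_cast [Nat.cast_sub h']
    ring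
  have hn2 : (2:ℝ) ≤ (n : ℝ) := by exact_mod_cast hn
  have hΓn : Real.Gamma (ηb + n) = (ηb + n - 1) * Real.Gamma (ηb + ((n : ℝ) - 1)) := by
    rw [show ηb + (n:ℝ) = (ηb + ((n:ℝ) - 1)) + 1 by ring,
      Real.Gamma_add_one (by nlinarith)]
    ring_nf
  have hΓn1pos : 0 < Real.Gamma (ηb + ((n : ℝ) - 1)) :=
    Real.Gamma_pos_of_pos (by nlinarith)
  rw [PDPweight_eq, ← hCdef, ← hP, hcastn]
  rw [show K * (((n:ℝ) - 1 - (C:ℝ) * ηa) * P) + K * ((ηb + (C:ℝ) * ηa) * P)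
        = K * ((ηb + (n:ℝ) - 1) * P) by ring]
  rw [hK, PDPK, PDPK, hΓn, hcastn]
  have h1 : ηb + (n:ℝ) - 1 ≠ 0 := by nlinarith
  have h2 : Real.Gamma (ηb + ((n:ℝ) - 1)) ≠ 0 := ne_of_gt hΓn1pos
  have h3 : Real.Gamma (ηb / ηa) ≠ 0 := ne_of_gt hΓr
  field_simp
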